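/- Let 0 < n' < 2 and suppose Ψ(ρ) ≤ Cρ^{1+1/n'} for small ρ ≥ 0. Then for every M > 0 the infimum h_M^r := inf H^r over the constraint set F_M^r is strictly negative. -/

import Mathlib

open MeasureTheory Real Set Filter

noncomputable section

abbrev E2 := EuclideanSpace ℝ (Fin 2)

/-- The gravitational potential energy of a flat density. -/
def Epot (ρ : E2 → ℝ) : ℝ :=
  -(1/2) * ∫ p : E2 × E2, ρ p.1 * ρ p.2 / ‖p.1 - p.2‖

/-- Membership in the reduced constraint set F_M^r (for a given Ψ). -/
def inFM (Ψ : ℝ → ℝ) (M : ℝ) (ρ : E2 → ℝ) : Prop :=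
  (∀ x, 0 ≤ ρ x) ∧ MemLp ρ (4/3) volume ∧ Integrable ρ ∧ (∫ x, ρ x) = M ∧
    Integrable (fun x => Ψ (ρ x))

/-- The reduced energy-Casimir functional. -/
def Hr (Ψ : ℝ → ℝ) (ρ : E2 → ℝ) : ℝ := (∫ x, Ψ (ρ x)) + Epot ρ

open Metric in
lemma intOn_inv_norm (r : ℝ) (hr : 0 < r) :
    IntegrableOn (fun y : E2 => ‖y‖⁻¹) (ball (0:E2) r) volume := by
  set S : ℕ → Set E2 := fun n => ball 0 (r/2^n) \ ball 0 (r/2^(n+1)) with hS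
  have hcover : ball (0:E2) r ⊆ {0} ∪ ⋃ n, S n := by
    intro y hy
    by_cases hy0 : y = 0
    · exact Or.inl hy0
    right
    have hny : 0 < ‖y‖ := norm_pos_iff.2 hy0
    have hex : ∃ n : ℕ, r / 2^(n+1) ≤ ‖y‖ := by
      obtain ⟨n, hn⟩ := pow_unbounded_of_one_lt (r / ‖y‖) (one_lt_two (α := ℝ))
      refine ⟨n, ?_⟩
      rw [div_le_iff₀ (by positivity)]
      rw [div_lt_iff₀ hny] at hn
      have h2n : (2:ℝ)^n * ‖y‖ ≤ ‖y‖ * 2^(n+1) := by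
        rw [mul_comm]
        gcongr
        · exact one_le_two
        · omega
      exact (hn.trans_le h2n).le
    set n := Nat.find hex with hn
    have h1 : r/2^(n+1) ≤ ‖y‖ := Nat.find_spec hex
    have h2 : ‖y‖ < r / 2^n := by
      rcases Nat.eq_zero_or_pos n with h | h
      · rw [h]; simpa using mem_ball_zero_iff.1 hy
      · have hmin := Nat.find_min hex (m := n - 1) (by omega)
        push_neg at hmin
        have : n - 1 + 1 = n := by omega
        rwa [this] at hmin
    refine mem_iUnion.2 ⟨n, mem_ball_zero_iff.2 h2, fun hmem => ?_⟩
    exact absurd (mem_ball_zero_iff.1 hmem) (not_lt.2 h1)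
  constructor
  · exact measurable_norm.inv.aestronglyMeasurable.restrict
  · rw [hasFiniteIntegral_iff_norm]
    set v := (volume : Measure E2) (ball (0:E2) 1) with hv
    have key : ∀ n : ℕ, ∫⁻ y in S n, ENNReal.ofReal ‖(‖y‖⁻¹ : ℝ)‖
        ≤ ENNReal.ofReal (2*r) * v * ENNReal.ofReal (1/2) ^ n := by
      intro n
      have hb : ∀ y ∈ S n, ENNReal.ofReal ‖(‖y‖⁻¹ : ℝ)‖ ≤ ENNReal.ofReal (2^(n+1)/r) := by
        intro y hy
        apply ENNReal.ofReal_le_ofReal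
        rw [Real.norm_eq_abs, abs_of_nonneg (by positivity)]
        have h1 : r/2^(n+1) ≤ ‖y‖ := by
          by_contra hc
          exact hy.2 (mem_ball_zero_iff.2 (not_le.1 hc))
        calc ‖y‖⁻¹ ≤ (r/2^(n+1))⁻¹ := by
              apply inv_anti₀ (by positivity) h1
          _ = 2^(n+1)/r := by rw [inv_div]
      have hmeas : MeasurableSet (S n) := measurableSet_ball.diff measurableSet_ball
      calc ∫⁻ y in S n, ENNReal.ofReal ‖(‖y‖⁻¹ : ℝ)‖
          ≤ ∫⁻ _ in S n, ENNReal.ofReal (2^(n+1)/r) := setLIntegral_mono' hmeas hb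
        _ = ENNReal.ofReal (2^(n+1)/r) * volume (S n) := by rw [setLIntegral_const]
        _ ≤ ENNReal.ofReal (2^(n+1)/r) * volume (ball (0:E2) (r/2^n)) := by
            gcongr
            exact diff_subset
        _ = ENNReal.ofReal (2^(n+1)/r) * (ENNReal.ofReal ((r/2^n)^2) * v) := by
            rw [Measure.addHaar_ball volume (0:E2) (by positivity), finrank_euclideanSpace_fin]
        _ = ENNReal.ofReal (2^(n+1)/r * (r/2^n)^2) * v := by
            rw [← mul_assoc, ← ENNReal.ofReal_mul (by positivity)]
        _ = ENNReal.ofReal (2*r*(1/2)^n) * v := by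
            congr 2
            rw [one_div, inv_pow]
            field_simp
            ring
        _ = ENNReal.ofReal (2*r) * v * ENNReal.ofReal (1/2) ^ n := by
            rw [ENNReal.ofReal_mul (by positivity), ENNReal.ofReal_pow (by norm_num)]
            ring
    calc ∫⁻ y in ball (0:E2) r, ENNReal.ofReal ‖(‖y‖⁻¹ : ℝ)‖
        ≤ ∫⁻ y in ({0} ∪ ⋃ n, S n), ENNReal.ofReal ‖(‖y‖⁻¹ : ℝ)‖ := lintegral_mono_set hcover
      _ ≤ (∫⁻ y in ({0} : Set E2), ENNReal.ofReal ‖(‖y‖⁻¹ : ℝ)‖)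
          + ∫⁻ y in (⋃ n, S n), ENNReal.ofReal ‖(‖y‖⁻¹ : ℝ)‖ := lintegral_union_le _ _ _
      _ ≤ 0 + ∑' n, ∫⁻ y in S n, ENNReal.ofReal ‖(‖y‖⁻¹ : ℝ)‖ := by
          gcongr
          · exact le_of_eq (setLIntegral_measure_zero _ _ (measure_singleton 0))
          · exact lintegral_iUnion_le _ _
      _ ≤ 0 + ∑' n, ENNReal.ofReal (2*r) * v * ENNReal.ofReal (1/2) ^ n := by
          gcongr
          exact key _
      _ = ENNReal.ofReal (2*r) * v * (1 - ENNReal.ofReal (1/2))⁻¹ := by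
          rw [zero_add, ENNReal.tsum_mul_left, ENNReal.tsum_geometric]
      _ < ⊤ := by
          refine ENNReal.mul_lt_top (ENNReal.mul_lt_top ENNReal.ofReal_lt_top measure_ball_lt_top) ?_
          rw [ENNReal.inv_lt_top]
          refine tsub_pos_of_lt ?_
          rw [← ENNReal.ofReal_one]
          exact (ENNReal.ofReal_lt_ofReal_iff one_pos).2 (by norm_num)

open Metric in
set_option maxHeartbeats 1000000 in
lemma sect_bound (x : E2) (R : ℝ) (hR : 0 < R) (hx : x ∈ ball (0:E2) R) :
    IntegrableOn (fun y : E2 => ‖x - y‖⁻¹) (ball (0:E2) R) volume ∧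
    (∫ y in ball (0:E2) R, ‖x - y‖⁻¹) ≤ ∫ z in ball (0:E2) (2*R), ‖z‖⁻¹ := by
  have hsub : ball (0:E2) R ⊆ ball x (2*R) := by
    intro y hy
    rw [mem_ball, dist_eq_norm]
    calc ‖y - x‖ ≤ ‖y‖ + ‖x‖ := norm_sub_le _ _
      _ < R + R := add_lt_add (mem_ball_zero_iff.1 hy) (mem_ball_zero_iff.1 hx)
      _ = 2*R := by ring
  have hpre : (fun y : E2 => x - y) ⁻¹' (ball (0:E2) (2*R)) = ball x (2*R) := by
    ext y; simp [mem_ball, dist_eq_norm, norm_sub_rev]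
  have hcomp : (fun y : E2 => ‖x - y‖⁻¹) = (fun z : E2 => ‖z‖⁻¹) ∘ (fun y : E2 => x - y) := rfl
  have hInt2 : IntegrableOn (fun y : E2 => ‖x - y‖⁻¹) (ball x (2*R)) volume := by
    rw [hcomp, ← hpre]
    exact ((Measure.measurePreserving_sub_left volume x).integrableOn_comp_preimage
      (Homeomorph.subLeft x).measurableEmbedding).2 (intOn_inv_norm (2*R) (by positivity))
  refine ⟨hInt2.mono_set hsub, ?_⟩
  calc ∫ y in ball (0:E2) R, ‖x - y‖⁻¹
      ≤ ∫ y in ball x (2*R), ‖x - y‖⁻¹ :=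
        setIntegral_mono_set hInt2 (ae_of_all _ fun y => inv_nonneg.2 (norm_nonneg _))
          (HasSubset.Subset.eventuallyLE hsub)
    _ = ∫ z in ball (0:E2) (2*R), ‖z‖⁻¹ := by
        rw [← hpre]
        exact (Measure.measurePreserving_sub_left volume x).setIntegral_preimage_emb
          (Homeomorph.subLeft x).measurableEmbedding (fun z : E2 => ‖z‖⁻¹) (ball (0:E2) (2*R))

theorem stmt13 (n' C ρ₁ : ℝ) (hn'1 : 0 < n') (hn'2 : n' < 2) (hC : 0 < C)
    (hρ₁ : 0 < ρ₁) (Ψ : ℝ → ℝ) (hΨ0 : ∀ s : ℝ, 0 ≤ s → 0 ≤ Ψ s)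
    (hsmall : ∀ s : ℝ, 0 ≤ s → s ≤ ρ₁ → Ψ s ≤ C * s ^ (1 + 1/n'))
    (M : ℝ) (hM : 0 < M) :
    sInf {y : EReal | ∃ ρ : E2 → ℝ, inFM Ψ M ρ ∧ y = (Hr Ψ ρ : EReal)} < 0 := by
  classical
  set v₁ : ℝ := ((volume : Measure E2) (Metric.ball (0:E2) 1)).toReal with hv₁def
  have hv₁pos : 0 < v₁ :=
    ENNReal.toReal_pos (Metric.measure_ball_pos volume 0 one_pos).ne' measure_ball_lt_top.ne
  have hexp : 0 < 2/n' - 1 := by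
    have : 1 < 2/n' := (one_lt_div hn'1).2 hn'2
    linarith
  set A : ℝ := 4*C*(M/v₁)^(1/n')/M with hA
  have h1 : Tendsto (fun R : ℝ => A * R^(1-2/n')) atTop (nhds 0) := by
    have h := (tendsto_rpow_neg_atTop hexp).const_mul A
    rw [mul_zero] at h
    have he : (1-2/n') = -(2/n'-1) := by ring
    rw [he]
    exact h
  have h2 : Tendsto (fun R : ℝ => M/(R^2*v₁)) atTop (nhds 0) := by
    apply Tendsto.div_atTop tendsto_const_nhds
    exact (tendsto_pow_atTop two_ne_zero).atTop_mul_const hv₁pos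
  obtain ⟨R, hRA, hRc, hR1⟩ :=
    ((h1.eventually (eventually_lt_nhds one_pos)).and
      ((h2.eventually (eventually_le_nhds hρ₁)).and (eventually_ge_atTop 1))).exists
  have hR0 : (0:ℝ) < R := lt_of_lt_of_le one_pos hR1
  set B : Set E2 := Metric.ball (0:E2) R with hB
  have hmeasB : MeasurableSet B := measurableSet_ball
  have hvolBlt : volume B < ⊤ := measure_ball_lt_top
  have hvolB : (volume B).toReal = R^2*v₁ := by
    rw [hB, Measure.addHaar_ball volume (0:E2) hR0.le, finrank_euclideanSpace_fin,
      ENNReal.toReal_mul, ENNReal.toReal_ofReal (by positivity), hv₁def]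
  set c : ℝ := M/(R^2*v₁) with hc
  have hc0 : 0 < c := by rw [hc]; positivity
  set ρ : E2 → ℝ := B.indicator (fun _ => c) with hρ
  have hρnn : ∀ x, 0 ≤ ρ x := fun x => indicator_nonneg (fun _ _ => hc0.le) x
  have hρmeas : Measurable ρ := measurable_const.indicator hmeasB
  have hρint : Integrable ρ := by
    rw [hρ, integrable_indicator_iff hmeasB]
    exact integrableOn_const hvolBlt.ne
  have hρLp : MemLp ρ (4/3) volume := by
    rw [hρ]
    exact memLp_indicator_const _ hmeasB c (Or.inr hvolBlt.ne)
  have hρsum : (∫ x, ρ x) = M := by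
    rw [hρ, integral_indicator_const c hmeasB, smul_eq_mul, measureReal_def, hvolB, hc]
    field_simp
  have hΨ00 : Ψ 0 = 0 := by
    refine le_antisymm ?_ (hΨ0 0 le_rfl)
    have h := hsmall 0 le_rfl hρ₁.le
    rwa [Real.zero_rpow (by positivity : (0:ℝ) < 1+1/n').ne', mul_zero] at h
  have hΨρ : (fun x => Ψ (ρ x)) = B.indicator (fun _ => Ψ c) := by
    funext x
    by_cases hx : x ∈ B
    · rw [hρ]; simp only [indicator_of_mem hx]
    · rw [hρ]; simp only [indicator_of_notMem hx]; exact hΨ00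
  have hΨint : Integrable fun x => Ψ (ρ x) := by
    rw [hΨρ, integrable_indicator_iff hmeasB]
    exact integrableOn_const hvolBlt.ne
  have hinFM : inFM Ψ M ρ := ⟨hρnn, hρLp, hρint, hρsum, hΨint⟩
  -- bound on the Casimir term
  have hcρ : c ≤ ρ₁ := by rw [hc]; exact hRc
  have hΨsum : (∫ x, Ψ (ρ x)) ≤ C*M*(M/v₁)^(1/n')*R^(-(2/n')) := by
    rw [hΨρ, integral_indicator_const _ hmeasB, smul_eq_mul, measureReal_def, hvolB]
    have hle : Ψ c ≤ C * c^(1+1/n') := hsmall c hc0.le hcρ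
    have h2' : c^(1+1/n') = c * c^(1/n') := by rw [rpow_add hc0, rpow_one]
    have h3 : c^(1/n') = (M/v₁)^(1/n') * R^(-(2/n')) := by
      rw [hc]
      have hre : M/(R^2*v₁) = (M/v₁)/R^2 := by ring
      rw [hre, div_rpow (by positivity) (by positivity), ← rpow_natCast R 2, ← rpow_mul hR0.le,
        show ((2:ℕ):ℝ)*(1/n') = 2/n' by push_cast; ring, rpow_neg hR0.le, div_eq_mul_inv]
    calc R^2*v₁ * Ψ c ≤ R^2*v₁ * (C * (c * c^(1/n'))) := by
          rw [← h2']; exact mul_le_mul_of_nonneg_left hle (by positivity)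
      _ = C*M*(M/v₁)^(1/n')*R^(-(2/n')) := by
          rw [h3, hc]
          field_simp
  -- the potential term
  set K : ℝ := ∫ z in Metric.ball (0:E2) (2*R), ‖z‖⁻¹ with hK
  have hK0 : 0 ≤ K := setIntegral_nonneg measurableSet_ball (fun z _ => inv_nonneg.2 (norm_nonneg _))
  set F : E2 × E2 → ℝ := fun p => ρ p.1 * ρ p.2 / ‖p.1 - p.2‖ with hFdef
  have hFmeas : Measurable F :=
    ((hρmeas.comp measurable_fst).mul (hρmeas.comp measurable_snd)).div
      ((measurable_fst.sub measurable_snd).norm)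
  have hFnn : ∀ p, 0 ≤ F p := fun p => div_nonneg (mul_nonneg (hρnn _) (hρnn _)) (norm_nonneg _)
  have hFoff : ∀ x : E2, x ∉ B → ∀ y, F (x, y) = 0 := by
    intro x hx y
    rw [hFdef]
    simp [hρ, indicator_of_notMem hx]
  have hFon : ∀ x ∈ B, ∀ y, F (x, y) = c * B.indicator (fun y => c * ‖x - y‖⁻¹) y := by
    intro x hx y
    by_cases hy : y ∈ B
    · rw [hFdef]
      simp only [hρ, indicator_of_mem hx, indicator_of_mem hy]
      rw [div_eq_mul_inv, mul_assoc]
    · rw [hFdef]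
      simp only [hρ, indicator_of_mem hx, indicator_of_notMem hy, mul_zero, zero_div]
  have hsect : ∀ x : E2, Integrable (fun y => F (x, y)) volume := by
    intro x
    by_cases hx : x ∈ B
    · have heq : (fun y => F (x, y)) = fun y => c * B.indicator (fun y => c * ‖x - y‖⁻¹) y :=
        funext (hFon x hx)
      rw [heq]
      apply Integrable.const_mul
      rw [integrable_indicator_iff hmeasB]
      exact (sect_bound x R hR0 hx).1.const_mul c
    · have heq : (fun y => F (x, y)) = fun _ => (0:ℝ) := funext (hFoff x hx)
      rw [heq]
      exact integrable_zero _ _ _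
  have hmarg : ∀ x : E2, (∫ y, ‖F (x, y)‖) ≤ B.indicator (fun _ => c^2*K) x := by
    intro x
    by_cases hx : x ∈ B
    · rw [indicator_of_mem hx]
      have heq : ∀ y, ‖F (x, y)‖ = B.indicator (fun y => c^2 * ‖x - y‖⁻¹) y := by
        intro y
        rw [Real.norm_eq_abs, abs_of_nonneg (hFnn _), hFon x hx y]
        by_cases hy : y ∈ B
        · rw [indicator_of_mem hy, indicator_of_mem hy]; ring
        · rw [indicator_of_notMem hy, indicator_of_notMem hy, mul_zero]
      calc (∫ y, ‖F (x, y)‖) = ∫ y, B.indicator (fun y => c^2 * ‖x - y‖⁻¹) y := by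
            simp_rw [heq]
        _ = ∫ y in B, c^2 * ‖x - y‖⁻¹ := integral_indicator hmeasB
        _ = c^2 * ∫ y in B, ‖x - y‖⁻¹ := integral_const_mul _ _
        _ ≤ c^2 * K := mul_le_mul_of_nonneg_left (sect_bound x R hR0 hx).2 (by positivity)
    · rw [indicator_of_notMem hx]
      have hz : ∀ y : E2, ‖F (x, y)‖ = 0 := fun y => by rw [hFoff x hx y, norm_zero]
      simp only [hz, integral_zero]
      exact le_refl 0
  have hFint : Integrable F := by
    rw [Measure.volume_eq_prod]
    have hFm' : AEStronglyMeasurable F ((volume : Measure E2).prod volume) := by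
      rw [← Measure.volume_eq_prod]
      exact hFmeas.aestronglyMeasurable
    refine (integrable_prod_iff hFm').2 ⟨ae_of_all _ hsect, ?_⟩
    refine Integrable.mono' (g := B.indicator (fun _ => c^2*K)) ((integrable_indicator_iff hmeasB).2
      (integrableOn_const hvolBlt.ne)) hFm'.norm.integral_prod_right' (ae_of_all _ ?_)
    intro x
    rw [Real.norm_eq_abs, abs_of_nonneg (integral_nonneg fun y => norm_nonneg _)]
    exact hmarg x
  have hdiag : (volume : Measure (E2 × E2)) {p : E2 × E2 | p.1 = p.2} = 0 := by
    have hD : MeasurableSet {p : E2 × E2 | p.1 = p.2} :=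
      measurableSet_eq_fun measurable_fst measurable_snd
    rw [Measure.volume_eq_prod, Measure.prod_apply hD]
    have hfib : ∀ x : E2, Prod.mk x ⁻¹' {p : E2 × E2 | p.1 = p.2} = {x} := by
      intro x; ext y; simp [eq_comm]
    simp [hfib, measure_singleton]
  have hGint : Integrable ((B ×ˢ B).indicator (fun _ => c^2*(2*R)⁻¹) : E2 × E2 → ℝ) := by
    rw [integrable_indicator_iff (hmeasB.prod hmeasB)]
    refine integrableOn_const (ne_of_lt ?_)
    rw [Measure.volume_eq_prod, Measure.prod_prod]
    exact ENNReal.mul_lt_top hvolBlt hvolBlt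
  have hlow : ((B ×ˢ B).indicator (fun _ => c^2*(2*R)⁻¹) : E2 × E2 → ℝ) ≤ᵐ[volume] F := by
    have hne : ∀ᵐ p : E2 × E2, p.1 ≠ p.2 := by
      rw [ae_iff]
      simpa using hdiag
    filter_upwards [hne] with p hp
    by_cases hp2 : p ∈ B ×ˢ B
    · rw [indicator_of_mem hp2]
      obtain ⟨hp1, hp2'⟩ := hp2
      have hpos : 0 < ‖p.1 - p.2‖ := norm_pos_iff.2 (sub_ne_zero.2 hp)
      have hlt : ‖p.1 - p.2‖ ≤ 2*R := by
        calc ‖p.1 - p.2‖ ≤ ‖p.1‖ + ‖p.2‖ := norm_sub_le _ _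
          _ ≤ R + R := add_le_add (mem_ball_zero_iff.1 hp1).le (mem_ball_zero_iff.1 hp2').le
          _ = 2*R := by ring
      have hFp : F p = c^2 * ‖p.1 - p.2‖⁻¹ := by
        rw [hFdef]
        simp only [hρ, indicator_of_mem hp1, indicator_of_mem hp2']
        rw [div_eq_mul_inv, sq]
      rw [hFp]
      exact mul_le_mul_of_nonneg_left (inv_anti₀ hpos hlt) (by positivity)
    · rw [indicator_of_notMem hp2]
      exact hFnn p
  have hFlower : M^2*(2*R)⁻¹ ≤ ∫ p, F p := by
    have hint := integral_mono_ae hGint hFint hlow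
    have hGval : (∫ p, ((B ×ˢ B).indicator (fun _ => c^2*(2*R)⁻¹) : E2 × E2 → ℝ) p)
        = M^2*(2*R)⁻¹ := by
      rw [integral_indicator_const _ (hmeasB.prod hmeasB), smul_eq_mul, measureReal_def,
        Measure.volume_eq_prod, Measure.prod_prod, ENNReal.toReal_mul, hvolB, hc]
      field_simp
    linarith
  have hEpot : Epot ρ ≤ -((1/2)*(M^2*(2*R)⁻¹)) := by
    have hEeq : Epot ρ = -(1/2) * ∫ p, F p := by rw [hFdef]; rfl
    rw [hEeq]
    linarith
  -- conclusion
  have hkey : C*M*(M/v₁)^(1/n')*R^(-(2/n')) < (1/2)*(M^2*(2*R)⁻¹) := by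
    have h := mul_lt_mul_of_pos_right hRA (show (0:ℝ) < M^2/(4*R) by positivity)
    rw [one_mul] at h
    have hsplit : R^(1-2/n') = R * R^(-(2/n')) := by
      rw [show (1-2/n') = 1 + (-(2/n')) by ring, rpow_add hR0, rpow_one]
    have hL : A * R^(1-2/n') * (M^2/(4*R)) = C*M*(M/v₁)^(1/n')*R^(-(2/n')) := by
      rw [hsplit, hA]
      field_simp
    have hR' : M^2/(4*R) = (1/2)*(M^2*(2*R)⁻¹) := by
      field_simp
      ring
    rw [hL, hR'] at h
    exact h
  have hHneg : Hr Ψ ρ < 0 := by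
    have : Hr Ψ ρ = (∫ x, Ψ (ρ x)) + Epot ρ := rfl
    rw [this]
    linarith
  refine lt_of_le_of_lt (sInf_le ⟨ρ, hinFM, rfl⟩) ?_
  exact_mod_cast hHneg
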